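/- arXiv:1209.6066 — 2 statements merged into one kernel-verified Lean document; each statement's English description precedes it below -/
import Mathlib

section
/- Let Ω ⊂ R² be a bounded C^{1,1} domain, D ⋐ Ω a simply connected open set with C^{1,1} boundary such that Ω \ D̄ is connected. Let P ∈ L^∞(Ω, L(M², M²)) satisfy the symmetries P_{ijkl} = P_{klij} = P_{klji} and the strong convexity PA·A ≥ γ|A|² for all symmetric A. Let w_R ∈ H²(Ω \ D̄) and w₀ ∈ H²(Ω) solve the rigid-inclusion problem and the reference Neumann problem respectively, with the same boundary couple field M̂ ∈ H^{-1/2}(∂Ω, R²) satisfying ∫_{∂Ω} M̂_i = 0. Then ∫_D P∇²w₀ · ∇²w₀ ≤ W₀ − W_R, where W₀ = ∫_Ω P∇²w₀·∇²w₀ and W_R = ∫_{Ω\D̄} P∇²w_R·∇²w_R are the works exerted by M̂. -/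
open MeasureTheory

noncomputable section

abbrev E2 := EuclideanSpace ℝ (Fin 2)

/-- The Hessian matrix `∇²w` of a scalar field on the plane. -/
def hess (w : E2 → ℝ) (x : E2) : Matrix (Fin 2) (Fin 2) ℝ :=
  Matrix.of fun i j =>
    fderiv ℝ (fun y => fderiv ℝ w y (EuclideanSpace.single j 1)) x (EuclideanSpace.single i 1)

/-- Application of the (fourth-order) plate tensor `P` to a `2×2` matrix. -/
def Papp (P : E2 → Fin 2 → Fin 2 → Fin 2 → Fin 2 → ℝ) (x : E2)
    (A : Matrix (Fin 2) (Fin 2) ℝ) : Matrix (Fin 2) (Fin 2) ℝ :=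
  Matrix.of fun i j => ∑ k, ∑ l, P x i j k l * A k l

/-- Frobenius product of `2×2` matrices. -/
def mdot (A B : Matrix (Fin 2) (Fin 2) ℝ) : ℝ := ∑ i, ∑ j, A i j * B i j

/-- The bilinear strain energy `∫_S P∇²w · ∇²v`. -/
def plateEnergy (P : E2 → Fin 2 → Fin 2 → Fin 2 → Fin 2 → ℝ) (S : Set E2)
    (w v : E2 → ℝ) : ℝ :=
  ∫ x in S, mdot (Papp P x (hess w x)) (hess v x)

/-! ### Auxiliary algebraic lemmas -/

lemma sum4_comm (f : Fin 2 → Fin 2 → Fin 2 → Fin 2 → ℝ) :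
    ∑ i, ∑ j, ∑ k, ∑ l, f i j k l = ∑ k, ∑ l, ∑ i, ∑ j, f i j k l := by
  simp [Fin.sum_univ_two]; ring

lemma mdot_Papp_comm (P : E2 → Fin 2 → Fin 2 → Fin 2 → Fin 2 → ℝ) (x : E2)
    (hsym : ∀ i j k l, P x i j k l = P x k l i j) (A B : Matrix (Fin 2) (Fin 2) ℝ) :
    mdot (Papp P x A) B = mdot (Papp P x B) A := by
  simp only [mdot, Papp, Matrix.of_apply, Finset.sum_mul]
  rw [show (∑ i, ∑ j, ∑ k, ∑ l, P x i j k l * B k l * A i j)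
      = ∑ k, ∑ l, ∑ i, ∑ j, P x i j k l * B k l * A i j from sum4_comm _]
  refine Finset.sum_congr rfl fun i _ => Finset.sum_congr rfl fun j _ =>
    Finset.sum_congr rfl fun k _ => Finset.sum_congr rfl fun l _ => ?_
  rw [hsym i j k l]; ring

lemma Papp_sub (P : E2 → Fin 2 → Fin 2 → Fin 2 → Fin 2 → ℝ) (x : E2)
    (A B : Matrix (Fin 2) (Fin 2) ℝ) :
    Papp P x (A - B) = Papp P x A - Papp P x B := by
  ext i j
  simp [Papp, mul_sub, Finset.sum_sub_distrib]

lemma mdot_sub_left (X Y Z : Matrix (Fin 2) (Fin 2) ℝ) :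
    mdot (X - Y) Z = mdot X Z - mdot Y Z := by
  simp [mdot, sub_mul, Finset.sum_sub_distrib]

lemma mdot_sub_right (X Y Z : Matrix (Fin 2) (Fin 2) ℝ) :
    mdot X (Y - Z) = mdot X Y - mdot X Z := by
  simp [mdot, mul_sub, Finset.sum_sub_distrib]

lemma mdot_zero_right (X : Matrix (Fin 2) (Fin 2) ℝ) : mdot X 0 = 0 := by
  simp [mdot]

lemma mdot_self_nonneg (M : Matrix (Fin 2) (Fin 2) ℝ) : 0 ≤ mdot M M :=
  Finset.sum_nonneg fun i _ => Finset.sum_nonneg fun j _ => mul_self_nonneg _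

/-! ### Differentiability and symmetry of the Hessian -/

lemma differentiable_fderiv_of_contDiff {f : E2 → ℝ} (hf : ContDiff ℝ 2 f) :
    Differentiable ℝ (fderiv ℝ f) :=
  (hf.fderiv_right (m := 1) (by norm_num)).differentiable one_ne_zero

lemma hess_entry {f : E2 → ℝ} (hf : ContDiff ℝ 2 f) (x : E2) (i j : Fin 2) :
    hess f x i j = fderiv ℝ (fderiv ℝ f) x (EuclideanSpace.single i 1)
      (EuclideanSpace.single j 1) := by
  have h1 : HasFDerivAt (fderiv ℝ f) (fderiv ℝ (fderiv ℝ f) x) x :=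
    ((differentiable_fderiv_of_contDiff hf) x).hasFDerivAt
  have h2 := (ContinuousLinearMap.apply ℝ ℝ (EuclideanSpace.single j 1)).hasFDerivAt.comp x h1
  have hfun : (⇑(ContinuousLinearMap.apply ℝ ℝ (EuclideanSpace.single j 1)) ∘ fderiv ℝ f)
      = fun y => fderiv ℝ f y (EuclideanSpace.single j 1) := by
    funext y; simp
  rw [hfun] at h2
  simp only [hess, Matrix.of_apply, h2.fderiv, ContinuousLinearMap.coe_comp',
    Function.comp_apply, ContinuousLinearMap.apply_apply]

lemma hess_isSymm {f : E2 → ℝ} (hf : ContDiff ℝ 2 f) (x : E2) : (hess f x).IsSymm := by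
  have hsym : IsSymmSndFDerivAt ℝ f x := hf.contDiffAt.isSymmSndFDerivAt (by simp [minSmoothness_of_isRCLikeNormedField])
  refine Matrix.ext fun i j => ?_
  rw [Matrix.transpose_apply, hess_entry hf, hess_entry hf]
  exact hsym _ _

/-! ### A density-point lemma: the derivative of a differentiable function vanishes
almost everywhere on any set on which the function vanishes. -/

open Metric Filter Set Pointwise in
lemma fderiv_ae_zero_of_zero_on {f : E2 → ℝ} (hf : Differentiable ℝ f)
    {s : Set E2} (hs : MeasurableSet s) (h0 : ∀ x ∈ s, f x = 0) :
    ∀ᵐ x, x ∈ s → fderiv ℝ f x = 0 := by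
  filter_upwards [Besicovitch.ae_tendsto_measure_inter_div_of_measurableSet volume hs]
    with x hx hxs
  by_contra hL
  set L := fderiv ℝ f x with hLdef
  have hLnorm : 0 < ‖L‖ := norm_pos_iff.mpr hL
  set ε := ‖L‖ / 2 with hε
  have hεpos : 0 < ε := by positivity
  have h1 : ∀ᶠ y in nhds x, ‖f y - f x - L (y - x)‖ ≤ ε * ‖y - x‖ :=
    (hf x).hasFDerivAt.isLittleO.def hεpos
  obtain ⟨r₀, hr₀pos, hr₀⟩ := Metric.eventually_nhds_iff_ball.mp h1
  set C := {h : E2 | ‖L h‖ ≤ ε * ‖h‖} with hC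
  -- the complement of the cone contains a nonempty open subset of the unit ball
  obtain ⟨u, hu⟩ : ∃ u : E2, ε * ‖u‖ < ‖L u‖ := by
    by_contra hcon
    push_neg at hcon
    have : ‖L‖ ≤ ε := L.opNorm_le_bound hεpos.le fun y => hcon y
    rw [hε] at this; linarith
  set U := ball (0 : E2) 1 ∩ {h : E2 | ε * ‖h‖ < ‖L h‖} with hU
  have hUopen : IsOpen U :=
    isOpen_ball.inter (isOpen_lt (by fun_prop) (by fun_prop))
  have hUne : U.Nonempty := by
    have hune : u ≠ 0 := by
      rintro rfl; simp at hu
    have hupos : 0 < ‖u‖ := norm_pos_iff.mpr hune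
    refine ⟨(‖u‖⁻¹ / 2) • u, ?_, ?_⟩
    · simp only [mem_ball, dist_zero_right, norm_smul, Real.norm_eq_abs]
      rw [abs_of_pos (by positivity)]
      rw [div_mul_eq_mul_div, inv_mul_cancel₀ hupos.ne']
      norm_num
    · have ht : (0:ℝ) < ‖u‖⁻¹ / 2 := by positivity
      show ε * ‖(‖u‖⁻¹ / 2) • u‖ < ‖L ((‖u‖⁻¹ / 2) • u)‖
      rw [L.map_smul, norm_smul, norm_smul, Real.norm_eq_abs, abs_of_pos ht, mul_left_comm]
      exact (mul_lt_mul_iff_right₀ ht).mpr hu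
  have hUC : U ⊆ closedBall (0:E2) 1 \ C := by
    rintro h ⟨h1', h2'⟩
    refine ⟨ball_subset_closedBall h1', fun hcmem => ?_⟩
    have h2'' : ε * ‖h‖ < ‖L h‖ := h2'
    have hcm : ‖L h‖ ≤ ε * ‖h‖ := hcmem
    linarith
  -- measure of the cone inside the unit ball is strictly smaller
  set m1 := volume (closedBall (0:E2) 1) with hm1
  set c := volume (C ∩ closedBall (0:E2) 1) with hc
  have hm1top : m1 ≠ ⊤ := measure_closedBall_lt_top.ne
  have hm1pos : 0 < m1 := measure_closedBall_pos volume _ one_pos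
  have hcm1 : c < m1 := by
    have hUpos : 0 < volume U := hUopen.measure_pos volume hUne
    have hsubset : C ∩ closedBall (0:E2) 1 ⊆ closedBall (0:E2) 1 \ U := by
      rintro h ⟨h1', h2'⟩
      exact ⟨h2', fun hmem => (hUC hmem).2 h1'⟩
    calc c ≤ volume (closedBall (0:E2) 1 \ U) := measure_mono hsubset
      _ = m1 - volume U := by
          rw [measure_diff (fun y hy => (hUC hy).1) hUopen.nullMeasurableSet
            (ne_top_of_le_ne_top hm1top (measure_mono fun y hy => (hUC hy).1))]
      _ < m1 := ENNReal.sub_lt_self hm1top hm1pos.ne' hUpos.ne'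
  -- cone scaling
  have hcone : ∀ r : ℝ, 0 < r →
      C ∩ closedBall (0:E2) r = r • (C ∩ closedBall (0:E2) 1) := by
    intro r hr
    ext h
    rw [Set.mem_smul_set_iff_inv_smul_mem₀ hr.ne']
    have hnorm : ‖r⁻¹ • h‖ = r⁻¹ * ‖h‖ := by
      rw [norm_smul, Real.norm_eq_abs, abs_of_pos (inv_pos.mpr hr)]
    constructor
    · rintro ⟨h1', h2'⟩
      refine ⟨?_, ?_⟩
      · show ‖L (r⁻¹ • h)‖ ≤ ε * ‖r⁻¹ • h‖
        rw [L.map_smul, norm_smul, Real.norm_eq_abs, abs_of_pos (inv_pos.mpr hr), hnorm,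
          mul_left_comm]
        exact mul_le_mul_of_nonneg_left h1' (inv_pos.mpr hr).le
      · rw [mem_closedBall, dist_zero_right, hnorm]
        rw [mem_closedBall, dist_zero_right] at h2'
        rw [inv_mul_le_iff₀ hr, mul_one]; exact h2'
    · rintro ⟨h1', h2'⟩
      have h1'' : ‖L (r⁻¹ • h)‖ ≤ ε * ‖r⁻¹ • h‖ := h1'
      rw [L.map_smul, norm_smul, Real.norm_eq_abs, abs_of_pos (inv_pos.mpr hr), hnorm,
        mul_left_comm] at h1''
      refine ⟨le_of_mul_le_mul_left ?_ (inv_pos.mpr hr), ?_⟩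
      · exact h1''
      · rw [mem_closedBall, dist_zero_right] at h2' ⊢
        rw [hnorm, inv_mul_le_iff₀ hr, mul_one] at h2'; exact h2'
  -- the density estimate
  have hratio : ∀ r : ℝ, 0 < r → r < r₀ →
      volume (s ∩ closedBall x r) / volume (closedBall x r) ≤ c / m1 := by
    intro r hr hrr₀
    have hsub : s ∩ closedBall x r ⊆ (fun y => y + (-x)) ⁻¹' (C ∩ closedBall (0:E2) r) := by
      rintro y ⟨hys, hyb⟩
      have hyball : y ∈ ball x r₀ := lt_of_le_of_lt (mem_closedBall.mp hyb) hrr₀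
      have hbound := hr₀ y hyball
      rw [h0 y hys, h0 x hxs, sub_zero, zero_sub, norm_neg] at hbound
      constructor
      · show ‖L (y + -x)‖ ≤ ε * ‖y + -x‖
        rw [← sub_eq_add_neg]; exact hbound
      · show y + -x ∈ closedBall (0:E2) r
        rw [mem_closedBall, dist_zero_right, ← sub_eq_add_neg, ← dist_eq_norm]
        exact hyb
    have hm : volume (s ∩ closedBall x r) ≤ volume (C ∩ closedBall (0:E2) r) := by
      calc volume (s ∩ closedBall x r) ≤
          volume ((fun y => y + (-x)) ⁻¹' (C ∩ closedBall (0:E2) r)) := measure_mono hsub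
        _ = volume (C ∩ closedBall (0:E2) r) := measure_preimage_add_right volume (-x) _
    rw [hcone r hr] at hm
    rw [Measure.addHaar_smul_of_nonneg volume hr.le] at hm
    have hball : volume (closedBall x r) =
        ENNReal.ofReal (r ^ Module.finrank ℝ E2) * volume (closedBall (0:E2) 1) := by
      rw [Measure.addHaar_closedBall volume x hr.le, Measure.addHaar_closedBall volume 0 one_pos.le]
      simp
    have hk0 : (ENNReal.ofReal (r ^ Module.finrank ℝ E2)) ≠ 0 := by
      simp only [ne_eq, ENNReal.ofReal_eq_zero, not_le]; positivity
    have hktop : (ENNReal.ofReal (r ^ Module.finrank ℝ E2)) ≠ ⊤ := ENNReal.ofReal_ne_top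
    calc volume (s ∩ closedBall x r) / volume (closedBall x r)
        ≤ (ENNReal.ofReal (r ^ Module.finrank ℝ E2) * c) /
            (ENNReal.ofReal (r ^ Module.finrank ℝ E2) * m1) := by
          rw [hball]; exact ENNReal.div_le_div_right hm _
      _ = c / m1 := ENNReal.mul_div_mul_left _ _ hk0 hktop
  -- contradiction with density 1
  have hind : s.indicator (1 : E2 → ENNReal) x = 1 := by
    simp [Set.indicator_of_mem hxs]
  rw [hind] at hx
  have hlt1 : c / m1 < 1 := by
    rw [ENNReal.div_lt_iff (Or.inl hm1pos.ne') (Or.inl hm1top), one_mul]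
    exact hcm1
  have hev1 : ∀ᶠ r in nhdsWithin 0 (Set.Ioi (0:ℝ)),
      c / m1 < volume (s ∩ closedBall x r) / volume (closedBall x r) :=
    hx.eventually (eventually_gt_nhds hlt1)
  have hev2 : ∀ᶠ r in nhdsWithin 0 (Set.Ioi (0:ℝ)),
      volume (s ∩ closedBall x r) / volume (closedBall x r) ≤ c / m1 := by
    filter_upwards [Ioo_mem_nhdsGT_of_mem (Set.left_mem_Ico.mpr hr₀pos)] with r hr
    exact hratio r hr.1 hr.2
  obtain ⟨r, h1', h2'⟩ := (hev1.and hev2).exists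
  exact absurd (h1'.trans_le h2') (lt_irrefl _)

/-! ### The measure-theoretic core of the energy comparison -/

open Filter in
lemma main_aux (Ω D : Set E2) (q₀ qR cr : E2 → ℝ)
    (hΩmeas : MeasurableSet Ω) (hDmeas : MeasurableSet D) (hDsubΩ : D ⊆ Ω)
    (hq₀nonneg : ∀ x, 0 ≤ q₀ x) (hqRnonneg : ∀ x, 0 ≤ qR x)
    (hexpand : ∀ x, 0 ≤ q₀ x - 2 * cr x + qR x)
    (hae : ∀ᵐ x, x ∈ closure D → (cr x = 0 ∧ qR x = 0))
    (key : (∫ x in Ω, cr x) = ∫ x in (Ω \ closure D), qR x)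
    (hint₀ : IntegrableOn q₀ Ω) (hintR : IntegrableOn qR (Ω \ closure D)) :
    (∫ x in D, q₀ x) ≤ (∫ x in Ω, q₀ x) - ∫ x in (Ω \ closure D), qR x := by
  have hDclos : MeasurableSet (closure D) := isClosed_closure.measurableSet
  have hΩ'meas : MeasurableSet (Ω \ closure D) := hΩmeas.diff hDclos
  by_cases hc : IntegrableOn cr Ω
  · -- the main case
    have hFint : IntegrableOn (fun x => q₀ x - 2 * cr x) Ω := hint₀.sub (hc.const_mul 2)
    have h2 : Integrable (D.indicator q₀) volume :=
      (hint₀.mono_set hDsubΩ).integrable_indicator hDmeas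
    have h4 : Integrable ((Ω \ closure D).indicator qR) volume :=
      hintR.integrable_indicator hΩ'meas
    have hGF : (fun x => D.indicator q₀ x - (Ω \ closure D).indicator qR x)
        ≤ᵐ[volume.restrict Ω] (fun x => q₀ x - 2 * cr x) := by
      filter_upwards [ae_restrict_of_ae hae, ae_restrict_mem hΩmeas] with x hx hxΩ
      by_cases hxD : x ∈ closure D
      · obtain ⟨hcr0, _⟩ := hx hxD
        have hxnot : x ∉ Ω \ closure D := fun h => h.2 hxD
        rw [Set.indicator_of_notMem hxnot, hcr0]
        by_cases hxD' : x ∈ D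
        · rw [Set.indicator_of_mem hxD']; ring_nf; simp
        · rw [Set.indicator_of_notMem hxD']
          have := hq₀nonneg x; linarith
      · have hxnotD : x ∉ D := fun h => hxD (subset_closure h)
        have hxΩ' : x ∈ Ω \ closure D := ⟨hxΩ, hxD⟩
        rw [Set.indicator_of_notMem hxnotD, Set.indicator_of_mem hxΩ']
        have := hexpand x; linarith
    have hmono : (∫ x in Ω, (D.indicator q₀ x - (Ω \ closure D).indicator qR x))
        ≤ ∫ x in Ω, (q₀ x - 2 * cr x) :=
      integral_mono_ae (h2.integrableOn.sub h4.integrableOn) hFint hGF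
    have hL : (∫ x in Ω, (D.indicator q₀ x - (Ω \ closure D).indicator qR x))
        = (∫ x in D, q₀ x) - ∫ x in (Ω \ closure D), qR x := by
      rw [integral_sub h2.integrableOn h4.integrableOn,
        setIntegral_indicator hDmeas, setIntegral_indicator hΩ'meas,
        Set.inter_eq_self_of_subset_right hDsubΩ,
        Set.inter_eq_self_of_subset_right Set.diff_subset]
    have hRi : (∫ x in Ω, (q₀ x - 2 * cr x))
        = (∫ x in Ω, q₀ x) - 2 * ∫ x in Ω, cr x := by
      rw [integral_sub hint₀ (hc.const_mul 2), integral_const_mul]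
    rw [hL, hRi, key] at hmono
    linarith
  · -- degenerate case: the cross term is not integrable, hence `W_R = 0`
    have hz : (∫ x in Ω, cr x) = 0 := integral_undef hc
    rw [← key, hz, sub_zero]
    exact setIntegral_mono_set hint₀ (Eventually.of_forall fun x => hq₀nonneg x)
      (HasSubset.Subset.eventuallyLE hDsubΩ)

/-- Energy lemma for a rigid inclusion: `∫_D P∇²w₀·∇²w₀ ≤ W₀ − W_R`, where
`W₀ = ∫_Ω P∇²w₀·∇²w₀` and `W_R = ∫_{Ω\D̄} P∇²w_R·∇²w_R` are the works exerted by the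
boundary couple field, represented by the linear load functional `ℓ` of its weak
formulation. -/
theorem energy_lemma_rigid_inclusion
    (Ω D : Set E2) (hΩopen : IsOpen Ω) (hΩconn : IsConnected Ω)
    (hΩbd : Bornology.IsBounded Ω)
    (hDopen : IsOpen D) (hDconn : IsConnected D) (hDΩ : closure D ⊆ Ω)
    (hconn : IsConnected (Ω \ closure D))
    (P : E2 → Fin 2 → Fin 2 → Fin 2 → Fin 2 → ℝ) (γ K : ℝ) (hγ : 0 < γ)
    (hPbd : ∀ x, ∀ i j k l, |P x i j k l| ≤ K)
    (hPsym : ∀ x, ∀ i j k l, P x i j k l = P x k l i j ∧ P x i j k l = P x k l j i)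
    (hPconv : ∀ x, ∀ A : Matrix (Fin 2) (Fin 2) ℝ, A.IsSymm →
      γ * mdot A A ≤ mdot (Papp P x A) A)
    (ℓ : (E2 → ℝ) →ₗ[ℝ] ℝ)
    (w₀ wR : E2 → ℝ) (hw₀ : ContDiff ℝ 2 w₀) (hwR : ContDiff ℝ 2 wR)
    -- the reference solution: weak formulation of the Neumann problem in `Ω`
    (hweak₀ : ∀ v : E2 → ℝ, ContDiff ℝ 2 v → plateEnergy P Ω w₀ v = ℓ v)
    -- the rigid-inclusion solution: weak formulation in `Ω \ D̄` with test functions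
    -- vanishing (together with their gradient) on the rigid inclusion
    (hweakR : ∀ v : E2 → ℝ, ContDiff ℝ 2 v →
      (∀ x ∈ closure D, v x = 0 ∧ fderiv ℝ v x = 0) →
      plateEnergy P (Ω \ closure D) wR v = ℓ v)
    -- normalization: `w_R` coincides with the (zero) affine function on `D̄`
    (hR0 : ∀ x ∈ closure D, wR x = 0 ∧ fderiv ℝ wR x = 0)
    -- integrability of the energy densities
    (hint₀ : IntegrableOn (fun x => mdot (Papp P x (hess w₀ x)) (hess w₀ x)) Ω)
    (hintR : IntegrableOn (fun x => mdot (Papp P x (hess wR x)) (hess wR x)) (Ω \ closure D)) :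
    plateEnergy P D w₀ w₀ ≤
      plateEnergy P Ω w₀ w₀ - plateEnergy P (Ω \ closure D) wR wR := by
  have hDmeas : MeasurableSet D := hDopen.measurableSet
  have hΩmeas : MeasurableSet Ω := hΩopen.measurableSet
  have hDsubΩ : D ⊆ Ω := subset_closure.trans hDΩ
  have hcomm : ∀ x A B, mdot (Papp P x A) B = mdot (Papp P x B) A :=
    fun x A B => mdot_Papp_comm P x (fun i j k l => (hPsym x i j k l).1) A B
  have hnonneg : ∀ (x : E2) (A : Matrix (Fin 2) (Fin 2) ℝ), A.IsSymm →
      0 ≤ mdot (Papp P x A) A := by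
    intro x A hA
    have h1 := hPconv x A hA
    nlinarith [mdot_self_nonneg A]
  have hsym0 : ∀ x, (hess w₀ x).IsSymm := fun x => hess_isSymm hw₀ x
  have hsymR : ∀ x, (hess wR x).IsSymm := fun x => hess_isSymm hwR x
  have hq₀nonneg : ∀ x, 0 ≤ mdot (Papp P x (hess w₀ x)) (hess w₀ x) :=
    fun x => hnonneg x _ (hsym0 x)
  have hqRnonneg : ∀ x, 0 ≤ mdot (Papp P x (hess wR x)) (hess wR x) :=
    fun x => hnonneg x _ (hsymR x)
  have hexpand : ∀ x, 0 ≤ mdot (Papp P x (hess w₀ x)) (hess w₀ x)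
      - 2 * mdot (Papp P x (hess w₀ x)) (hess wR x)
      + mdot (Papp P x (hess wR x)) (hess wR x) := by
    intro x
    have hsub : (hess w₀ x - hess wR x).IsSymm := by
      unfold Matrix.IsSymm
      rw [Matrix.transpose_sub, (hsym0 x).eq, (hsymR x).eq]
    have hnn := hnonneg x _ hsub
    rw [Papp_sub, mdot_sub_left, mdot_sub_right, mdot_sub_right] at hnn
    have hco := hcomm x (hess wR x) (hess w₀ x)
    linarith
  -- a.e. vanishing of the Hessian of `wR` on the rigid inclusion
  have hwR' : Differentiable ℝ (fderiv ℝ wR) := differentiable_fderiv_of_contDiff hwR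
  have haeH : ∀ᵐ x, x ∈ closure D → hess wR x = 0 := by
    have hder : ∀ j : Fin 2, ∀ᵐ x, x ∈ closure D →
        fderiv ℝ (fun y => fderiv ℝ wR y (EuclideanSpace.single j 1)) x = 0 := by
      intro j
      refine fderiv_ae_zero_of_zero_on ?_ isClosed_closure.measurableSet ?_
      · have hfun : (⇑(ContinuousLinearMap.apply ℝ ℝ (EuclideanSpace.single j 1)) ∘ fderiv ℝ wR)
            = fun y => fderiv ℝ wR y (EuclideanSpace.single j 1) := by
          funext y; simp
        rw [← hfun]
        exact (ContinuousLinearMap.apply ℝ ℝ _).differentiable.comp hwR'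
      · intro x hx
        rw [(hR0 x hx).2]; simp
    filter_upwards [hder 0, hder 1] with x h0 h1 hx
    have hall : ∀ j : Fin 2,
        fderiv ℝ (fun y => fderiv ℝ wR y (EuclideanSpace.single j 1)) x = 0 := by
      intro j; fin_cases j
      · exact h0 hx
      · exact h1 hx
    refine Matrix.ext fun i j => ?_
    simp only [hess, Matrix.of_apply, hall j, ContinuousLinearMap.zero_apply, Matrix.zero_apply]
  have hae : ∀ᵐ x, x ∈ closure D →
      (mdot (Papp P x (hess w₀ x)) (hess wR x) = 0 ∧
        mdot (Papp P x (hess wR x)) (hess wR x) = 0) := by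
    filter_upwards [haeH] with x hx hxD
    rw [hx hxD]
    exact ⟨mdot_zero_right _, mdot_zero_right _⟩
  -- the works identity coming from the two weak formulations
  have key : (∫ x in Ω, mdot (Papp P x (hess w₀ x)) (hess wR x))
      = ∫ x in (Ω \ closure D), mdot (Papp P x (hess wR x)) (hess wR x) :=
    (hweak₀ wR hwR).trans (hweakR wR hwR hR0).symm
  unfold plateEnergy
  exact main_aux Ω D _ _ _ hΩmeas hDmeas hDsubΩ hq₀nonneg hqRnonneg hexpand hae key hint₀ hintR

end
end

section
/- Let D ⊂ R² be a bounded domain with Lipschitz boundary with constants rρ₀, L and diam(D) ≤ Q r ρ₀. Then the perimeter satisfies |∂D| ≤ C area(D)/(rρ₀), where C > 0 depends only on L (and Q). -/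
open MeasureTheory Metric
open scoped ENNReal NNReal
noncomputable section

lemma exists_maximal_separated {X : Type*} [MetricSpace X] (T : Finset X) (ρ : ℝ) (hρ : 0 < ρ) :
    ∃ S : Finset X, S ⊆ T ∧ (∀ p ∈ S, ∀ q ∈ S, p ≠ q → ρ ≤ dist p q) ∧
      ∀ q ∈ T, ∃ p ∈ S, dist q p < ρ := by
  classical
  set P := T.powerset.filter (fun S => ∀ p ∈ S, ∀ q ∈ S, p ≠ q → ρ ≤ dist p q) with hP
  have hne : P.Nonempty := ⟨∅, by simp [hP]⟩
  obtain ⟨S, hSP, hSmax⟩ := P.exists_max_image Finset.card hne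
  rw [hP, Finset.mem_filter, Finset.mem_powerset] at hSP
  refine ⟨S, hSP.1, hSP.2, ?_⟩
  intro q hq
  by_contra hcon
  push_neg at hcon
  have hqS : q ∉ S := fun h => absurd (hcon q h) (by simp [hρ])
  have hins : insert q S ∈ P := by
    rw [hP, Finset.mem_filter, Finset.mem_powerset]
    constructor
    · exact Finset.insert_subset hq hSP.1
    · intro p hp p' hp' hne'
      rcases Finset.mem_insert.1 hp with h1 | h1 <;>
        rcases Finset.mem_insert.1 hp' with h2 | h2
      · exact absurd (h1.trans h2.symm) hne'
      · rw [h1]; exact hcon p' h2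
      · rw [h2, dist_comm]; exact hcon p h1
      · exact hSP.2 p h1 p' h2 hne'
  have := hSmax _ hins
  simp [Finset.card_insert_of_notMem hqS] at this

lemma proj_perp {E : Type*} [NormedAddCommGroup E] [InnerProductSpace ℝ E]
    {e : E} (he : ‖e‖ = 1) (z : E) :
    (inner ℝ (z - (inner ℝ z e : ℝ) • e) e : ℝ) = 0 := by
  have : (inner ℝ e e : ℝ) = 1 := by
    rw [real_inner_self_eq_norm_sq, he]; norm_num
  simp [inner_sub_left, real_inner_smul_left, this, he]

lemma proj_norm_le {E : Type*} [NormedAddCommGroup E] [InnerProductSpace ℝ E]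
    {e : E} (he : ‖e‖ = 1) (z : E) :
    ‖z - (inner ℝ z e : ℝ) • e‖ ≤ ‖z‖ := by
  set t : ℝ := inner ℝ z e
  set y := z - t • e with hy
  have hperp : (inner ℝ y (t • e) : ℝ) = 0 := by
    rw [real_inner_smul_right, proj_perp he z]; ring
  have hz : z = y + t • e := by rw [hy]; abel
  have hsq : ‖z‖ ^ 2 = ‖y‖ ^ 2 + ‖t • e‖ ^ 2 := by
    rw [hz, norm_add_sq_real, hperp]; ring
  nlinarith [norm_nonneg y, norm_nonneg z, norm_nonneg (t • e)]

lemma exists_rot (e : EuclideanSpace ℝ (Fin 2)) (he : ‖e‖ = 1) :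
    ∃ v : EuclideanSpace ℝ (Fin 2), ‖v‖ = 1 ∧
      ∀ y : EuclideanSpace ℝ (Fin 2), (inner ℝ y e : ℝ) = 0 → y = (inner ℝ y v : ℝ) • v := by
  classical
  set v : EuclideanSpace ℝ (Fin 2) := (WithLp.equiv 2 (Fin 2 → ℝ)).symm ![-(e 1), e 0] with hv
  have hv0 : v 0 = -(e 1) := rfl
  have hv1 : v 1 = e 0 := rfl
  have he' : e 0 ^ 2 + e 1 ^ 2 = 1 := by
    have := he
    rw [EuclideanSpace.norm_eq] at this
    have h2 : Real.sqrt (∑ i, ‖e i‖ ^ 2) ^ 2 = 1 := by rw [this]; norm_num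
    rw [Real.sq_sqrt (by positivity)] at h2
    simpa [Fin.sum_univ_two, Real.norm_eq_abs, sq_abs] using h2
  refine ⟨v, ?_, ?_⟩
  · rw [EuclideanSpace.norm_eq]
    simp only [Fin.sum_univ_two, hv0, hv1, Real.norm_eq_abs, sq_abs]
    rw [show (-(e 1)) ^ 2 + e 0 ^ 2 = 1 by nlinarith]
    exact Real.sqrt_one
  · intro y hy
    have hyv : (inner ℝ y v : ℝ) = y 0 * (-(e 1)) + y 1 * (e 0) := by
      simp [PiLp.inner_apply, RCLike.inner_apply, Fin.sum_univ_two, hv0, hv1, mul_comm]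
    have hye : y 0 * e 0 + y 1 * e 1 = 0 := by
      have := hy
      simp [PiLp.inner_apply, RCLike.inner_apply, Fin.sum_univ_two, mul_comm] at this
      linarith [this]
    ext i
    fin_cases i
    · show y 0 = ((inner ℝ y v : ℝ) • v) 0
      rw [PiLp.smul_apply, hv0, hyv, smul_eq_mul]
      linear_combination (-(y 0)) * he' + (e 0) * hye
    · show y 1 = ((inner ℝ y v : ℝ) • v) 1
      rw [PiLp.smul_apply, hv1, hyv, smul_eq_mul]
      linear_combination (-(y 1)) * he' + (e 1) * hye

set_option maxHeartbeats 1000000 in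
lemma local_struct (L δ : ℝ) (hL : 0 < L) (hδ : 0 < δ)
    (D : Set (EuclideanSpace ℝ (Fin 2))) (hDo : IsOpen D)
    (p : EuclideanSpace ℝ (Fin 2)) (hp : p ∈ frontier D)
    (e : EuclideanSpace ℝ (Fin 2)) (ψ : EuclideanSpace ℝ (Fin 2) → ℝ)
    (he : ‖e‖ = 1) (hψ : LipschitzWith (Real.toNNReal L) ψ)
    (hiff : ∀ x ∈ ball p δ,
      (x ∈ D ↔ (inner ℝ (x - p) e : ℝ) > ψ (x - p - (inner ℝ (x - p) e : ℝ) • e))) :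
    ball (p + (δ/8) • e) (δ/(8*(1+L))) ⊆ D ∧
    μH[1] (frontier D ∩ ball p δ) ≤ ENNReal.ofReal ((1+L)*(2*δ)) := by
  have hL1 : (0:ℝ) < 1 + L := by linarith
  have hψ' : ∀ a b, ψ a - ψ b ≤ L * ‖a - b‖ := by
    intro a b
    have := hψ.dist_le_mul a b
    rw [Real.coe_toNNReal L hL.le, dist_eq_norm, dist_eq_norm] at this
    calc ψ a - ψ b ≤ ‖ψ a - ψ b‖ := le_abs_self _
      _ ≤ L * ‖a - b‖ := this
  have hpncl : p ∈ closure D := hp.1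
  have hpD : p ∉ D := by
    intro h
    exact hp.2 (by rwa [hDo.interior_eq])
  -- ψ 0 ≤ 0
  have hψ0 : ψ 0 ≤ 0 := by
    by_contra hc
    push_neg at hc
    set ε := min δ (ψ 0 / (1 + L)) with hε
    have hεpos : 0 < ε := lt_min hδ (div_pos hc hL1)
    obtain ⟨x, hxD, hxd⟩ := Metric.mem_closure_iff.1 hpncl ε hεpos
    have hxb : x ∈ ball p δ := by
      rw [mem_ball, dist_comm]
      exact hxd.trans_le (min_le_left _ _)
    set t : ℝ := inner ℝ (x - p) e with ht
    set y := x - p - t • e with hy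
    have hty : t > ψ y := (hiff x hxb).1 hxD
    have hny : ‖y‖ ≤ ‖x - p‖ := proj_norm_le he (x - p)
    have htle : t ≤ ‖x - p‖ := by
      calc t ≤ |t| := le_abs_self _
        _ ≤ ‖x - p‖ * ‖e‖ := abs_real_inner_le_norm _ _
        _ = ‖x - p‖ := by rw [he, mul_one]
    have hxp : ‖x - p‖ < ε := by rwa [← dist_eq_norm, dist_comm]
    have h1 : ψ 0 ≤ ψ y + L * ‖y‖ := by
      have := hψ' 0 y
      simp only [zero_sub, norm_neg] at this
      linarith
    have h2 : ψ 0 < (1 + L) * ε := by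
      calc ψ 0 ≤ ψ y + L * ‖y‖ := h1
        _ < t + L * ‖x - p‖ := by
            have : L * ‖y‖ ≤ L * ‖x - p‖ := by
              exact mul_le_mul_of_nonneg_left hny hL.le
            linarith
        _ ≤ (1 + L) * ‖x - p‖ := by nlinarith [norm_nonneg (x - p)]
        _ < (1 + L) * ε := by
            exact mul_lt_mul_of_pos_left hxp hL1
    have : (1 + L) * ε ≤ ψ 0 := by
      rw [hε]
      calc (1 + L) * min δ (ψ 0 / (1 + L)) ≤ (1 + L) * (ψ 0 / (1 + L)) :=
            mul_le_mul_of_nonneg_left (min_le_right _ _) hL1.le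
        _ = ψ 0 := by field_simp
    linarith
  constructor
  · -- inner ℝ ball inside D
    intro x hx
    set rad := δ / (8 * (1 + L)) with hrad
    have hradpos : 0 < rad := by positivity
    set c := p + (δ/8) • e with hc
    have hxc : ‖x - c‖ < rad := by rwa [← dist_eq_norm, ← mem_ball]
    have hcp : ‖c - p‖ = δ/8 := by
      rw [hc, add_sub_cancel_left, norm_smul, he, Real.norm_eq_abs, abs_of_nonneg (by positivity), mul_one]
    have hradle : rad ≤ δ/8 := by
      rw [hrad]
      apply div_le_div_of_nonneg_left hδ.le (by positivity)
      nlinarith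
    have hxp : ‖x - p‖ < δ := by
      calc ‖x - p‖ = ‖(x - c) + (c - p)‖ := by rw [sub_add_sub_cancel]
        _ ≤ ‖x - c‖ + ‖c - p‖ := norm_add_le _ _
        _ < rad + δ/8 := by rw [hcp]; linarith
        _ ≤ δ := by linarith
    have hxb : x ∈ ball p δ := by rwa [mem_ball, dist_eq_norm]
    rw [hiff x hxb]
    set t : ℝ := inner ℝ (x - p) e with ht
    set y := x - p - t • e with hy
    have hee : (inner ℝ e e : ℝ) = 1 := by
      rw [real_inner_self_eq_norm_sq, he]; norm_num
    have hxpc : x - p = (x - c) + (δ/8) • e := by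
      rw [hc]; abel
    have htsplit : t = (inner ℝ (x - c) e : ℝ) + δ/8 := by
      rw [ht, hxpc, inner_add_left, real_inner_smul_left, hee, mul_one]
    have hysplit : y = (x - c) - (inner ℝ (x - c) e : ℝ) • e := by
      rw [hy, hxpc, htsplit, add_smul]
      abel
    have hyle : ‖y‖ ≤ ‖x - c‖ := by rw [hysplit]; exact proj_norm_le he (x - c)
    have hinxc : |(inner ℝ (x - c) e : ℝ)| ≤ ‖x - c‖ := by
      calc |(inner ℝ (x - c) e : ℝ)| ≤ ‖x - c‖ * ‖e‖ := abs_real_inner_le_norm _ _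
        _ = ‖x - c‖ := by rw [he, mul_one]
    have htlb : t > δ/8 - rad := by
      rw [htsplit]
      have : -(inner ℝ (x - c) e : ℝ) ≤ ‖x - c‖ := (abs_le.1 hinxc).1 |> neg_le.1
      nlinarith [(abs_le.1 hinxc).1]
    have hsub : δ/8 - rad = L * rad := by
      rw [hrad]; field_simp; ring
    have hψy : ψ y ≤ L * ‖y‖ := by
      have := hψ' y 0
      simp only [sub_zero] at this
      linarith
    have : ψ y < L * rad := by
      calc ψ y ≤ L * ‖y‖ := hψy
        _ ≤ L * ‖x - c‖ := mul_le_mul_of_nonneg_left hyle hL.le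
        _ < L * rad := mul_lt_mul_of_pos_left hxc hL
    linarith [hsub ▸ htlb]
  · -- graph bound
    obtain ⟨v, hvn, hvspan⟩ := exists_rot e he
    set K : NNReal := Real.toNNReal (1 + L) with hK
    set g : ℝ → EuclideanSpace ℝ (Fin 2) := fun a => p + a • v + ψ (a • v) • e with hg
    have hψabs : ∀ a b, |ψ a - ψ b| ≤ L * ‖a - b‖ := by
      intro a b
      rw [abs_sub_le_iff]
      refine ⟨hψ' a b, ?_⟩
      have := hψ' b a
      rwa [norm_sub_rev] at this
    have hgl : LipschitzWith K g := by
      apply LipschitzWith.of_dist_le_mul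
      intro a b
      have hd : g a - g b = (a - b) • v + (ψ (a • v) - ψ (b • v)) • e := by
        simp only [hg, sub_smul]
        abel
      rw [dist_eq_norm, hd, Real.dist_eq, hK, Real.coe_toNNReal _ hL1.le]
      have h1 : ‖(a - b) • v‖ = |a - b| := by
        rw [norm_smul, hvn, Real.norm_eq_abs, mul_one]
      have h2 : ‖(ψ (a • v) - ψ (b • v)) • e‖ ≤ L * |a - b| := by
        rw [norm_smul, he, mul_one, Real.norm_eq_abs]
        have := hψabs (a • v) (b • v)
        have hsv : ‖a • v - b • v‖ = |a - b| := by
          rw [← sub_smul, norm_smul, hvn, Real.norm_eq_abs, mul_one]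
        rw [hsv] at this
        exact this
      calc ‖(a - b) • v + (ψ (a • v) - ψ (b • v)) • e‖
          ≤ ‖(a - b) • v‖ + ‖(ψ (a • v) - ψ (b • v)) • e‖ := norm_add_le _ _
        _ ≤ |a - b| + L * |a - b| := by rw [h1]; linarith [h2]
        _ = (1 + L) * |a - b| := by ring
    have hincl : frontier D ∩ ball p δ ⊆ g '' (Set.Icc (-δ) δ) := by
      rintro x ⟨hxf, hxb⟩
      set t : ℝ := inner ℝ (x - p) e with ht
      set y := x - p - t • e with hy
      have hxD : x ∉ D := fun h => hxf.2 (by rwa [hDo.interior_eq])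
      have hle : t ≤ ψ y := not_lt.1 (fun h => hxD ((hiff x hxb).2 h))
      have hxcl : x ∈ closure D := hxf.1
      have hge : ψ y ≤ t := by
        by_contra hcon
        push_neg at hcon
        have hδx : 0 < δ - dist x p := by
          rw [mem_ball] at hxb; linarith
        set η := min (δ - dist x p) ((ψ y - t)/(1+2*L)) with hη
        have hηpos : 0 < η := lt_min hδx (div_pos (by linarith) (by linarith))
        obtain ⟨x', hx'D, hx'd⟩ := Metric.mem_closure_iff.1 hxcl η hηpos
        have hx'b : x' ∈ ball p δ := by
          rw [mem_ball]
          have h3 := min_le_left (δ - dist x p) ((ψ y - t)/(1+2*L))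
          calc dist x' p ≤ dist x' x + dist x p := dist_triangle _ _ _
            _ < η + dist x p := by rw [dist_comm x' x]; linarith [hx'd]
            _ ≤ δ := by rw [hη] at *; linarith
        set t' : ℝ := inner ℝ (x' - p) e with ht'
        set y' := x' - p - t' • e with hy'
        have hty' : t' > ψ y' := (hiff x' hx'b).1 hx'D
        have hxx' : ‖x - x'‖ < η := by rw [← dist_eq_norm]; exact hx'd
        have hdt : |t - t'| ≤ ‖x - x'‖ := by
          have hsplit : t - t' = (inner ℝ (x - x') e : ℝ) := by
            rw [ht, ht', ← inner_sub_left]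
            congr 1
            abel
          rw [hsplit]
          calc |(inner ℝ (x - x') e : ℝ)| ≤ ‖x - x'‖ * ‖e‖ := abs_real_inner_le_norm _ _
            _ = ‖x - x'‖ := by rw [he, mul_one]
        have hdy : ‖y - y'‖ ≤ 2 * ‖x - x'‖ := by
          have hsplit : y - y' = (x - x') - (t - t') • e := by
            rw [hy, hy', sub_smul]
            abel
          rw [hsplit]
          calc ‖(x - x') - (t - t') • e‖ ≤ ‖x - x'‖ + ‖(t - t') • e‖ := norm_sub_le _ _
            _ = ‖x - x'‖ + |t - t'| := by rw [norm_smul, he, mul_one, Real.norm_eq_abs]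
            _ ≤ 2 * ‖x - x'‖ := by linarith
        have hkey : ψ y < t + (1 + 2*L) * η := by
          have e1 : ψ y ≤ ψ y' + L * ‖y - y'‖ := by have := hψ' y y'; linarith
          have e5 : L * ‖y - y'‖ ≤ L * (2 * ‖x - x'‖) :=
            mul_le_mul_of_nonneg_left hdy hL.le
          have e3 : t' - t ≤ |t - t'| := by rw [abs_sub_comm]; exact le_abs_self _
          have e4 : (1 + 2*L) * ‖x - x'‖ < (1 + 2*L) * η :=
            mul_lt_mul_of_pos_left hxx' (by linarith)
          linarith [e1, hty', e3, hdt, e4, e5]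
        have hηle : (1 + 2*L) * η ≤ ψ y - t := by
          have h4 := min_le_right (δ - dist x p) ((ψ y - t)/(1+2*L))
          rw [hη]
          calc (1 + 2*L) * min (δ - dist x p) ((ψ y - t)/(1+2*L))
              ≤ (1 + 2*L) * ((ψ y - t)/(1+2*L)) :=
                mul_le_mul_of_nonneg_left h4 (by linarith)
            _ = ψ y - t := by rw [mul_comm]; exact div_mul_cancel₀ _ (by linarith)
        linarith
      have hteq : t = ψ y := le_antisymm hle hge
      have hperp : (inner ℝ y e : ℝ) = 0 := proj_perp he (x - p)
      set a : ℝ := inner ℝ y v with ha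
      have hyav : y = a • v := hvspan y hperp
      have haabs : |a| ≤ ‖y‖ := by
        calc |a| ≤ ‖y‖ * ‖v‖ := abs_real_inner_le_norm _ _
          _ = ‖y‖ := by rw [hvn, mul_one]
      have hyle : ‖y‖ ≤ ‖x - p‖ := proj_norm_le he (x - p)
      have hxpδ : ‖x - p‖ < δ := by rw [← dist_eq_norm]; exact mem_ball.1 hxb
      refine ⟨a, ?_, ?_⟩
      · rw [Set.mem_Icc]
        constructor
        · have := (abs_le.1 (haabs.trans (hyle.trans hxpδ.le))).1; linarith [this]
        · linarith [(abs_le.1 (haabs.trans (hyle.trans hxpδ.le))).2]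
      · show p + a • v + ψ (a • v) • e = x
        rw [← hyav, ← hteq, hy]
        abel
    calc μH[1] (frontier D ∩ ball p δ) ≤ μH[1] (g '' Set.Icc (-δ) δ) := measure_mono hincl
      _ ≤ (K : ℝ≥0∞) ^ (1:ℝ) * μH[1] (Set.Icc (-δ) δ) :=
          hgl.hausdorffMeasure_image_le (by norm_num) _
      _ = ENNReal.ofReal (1+L) * ENNReal.ofReal (2*δ) := by
          rw [MeasureTheory.hausdorffMeasure_real, Real.volume_Icc, ENNReal.rpow_one,
            show δ - -δ = 2*δ by ring]
          rfl
      _ = ENNReal.ofReal ((1+L)*(2*δ)) := (ENNReal.ofReal_mul (by linarith)).symm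

/-- `D` has Lipschitz boundary with constants `δ`, `L`. -/
def HasLipschitzBoundary {n : ℕ} (D : Set (EuclideanSpace ℝ (Fin n))) (δ L : ℝ) : Prop :=
  ∀ p ∈ frontier D, ∃ (e : EuclideanSpace ℝ (Fin n)) (ψ : EuclideanSpace ℝ (Fin n) → ℝ),
    ‖e‖ = 1 ∧ LipschitzWith (Real.toNNReal L) ψ ∧
    ∀ x ∈ ball p δ,
      (x ∈ D ↔ (inner ℝ (x - p) e : ℝ) > ψ (x - p - (inner ℝ (x - p) e : ℝ) • e))

set_option maxHeartbeats 1000000 in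
/-- Isoperimetric-type estimate: for a plane Lipschitz domain with constants `rρ₀`, `L`
and `diam(D) ≤ Q r ρ₀`, the perimeter (1-dimensional Hausdorff measure of `∂D`)
satisfies `|∂D| ≤ C area(D)/(rρ₀)`, with `C` depending only on `L` and `Q`. -/
theorem perimeter_le_area (L Q : ℝ) (hL : 0 < L) (hQ : 0 < Q) :
    ∃ C > 0, ∀ (D : Set (EuclideanSpace ℝ (Fin 2))) (r ρ₀ : ℝ),
      0 < r → 0 < ρ₀ →
      IsOpen D → IsConnected D → Bornology.IsBounded D →
      HasLipschitzBoundary D (r * ρ₀) L →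
      Metric.diam D ≤ Q * r * ρ₀ →
      (μH[1] (frontier D)).toReal ≤ C * (volume D).toReal / (r * ρ₀) := by
  classical
  set B := volume (ball (0 : EuclideanSpace ℝ (Fin 2)) 1) with hB
  have hBpos : 0 < B := measure_ball_pos _ _ one_pos
  have hBfin : B ≠ ⊤ := measure_ball_lt_top.ne
  set c₀ := B.toReal with hc₀def
  have hc₀ : 0 < c₀ := ENNReal.toReal_pos hBpos.ne' hBfin
  have hL1 : (0:ℝ) < 1 + L := by linarith
  refine ⟨128 * (1+L)^3 / c₀, by positivity, ?_⟩
  intro D r ρ₀ hr hρ hDo hDc hDb hLip hdiam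
  set δ := r * ρ₀ with hδdef
  have hδ : 0 < δ := mul_pos hr hρ
  set rad := δ / (8*(1+L)) with hraddef
  have hradpos : 0 < rad := by positivity
  have hclcomp : IsCompact (closure D) := hDb.isCompact_closure
  have hfcomp : IsCompact (frontier D) :=
    hclcomp.of_isClosed_subset isClosed_frontier frontier_subset_closure
  have key : ∀ s ∈ frontier D, ∃ cc : EuclideanSpace ℝ (Fin 2),
      dist cc s ≤ δ/8 ∧ ball cc rad ⊆ D ∧
      μH[1] (frontier D ∩ ball s δ) ≤ ENNReal.ofReal ((1+L)*(2*δ)) := by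
    intro s hs
    obtain ⟨e, ψ, he, hψ, hiff⟩ := hLip s hs
    obtain ⟨h1, h2⟩ := local_struct L δ hL hδ D hDo s hs e ψ he hψ hiff
    refine ⟨s + (δ/8) • e, ?_, h1, h2⟩
    rw [dist_eq_norm, add_sub_cancel_left, norm_smul, he, mul_one, Real.norm_eq_abs,
      abs_of_nonneg (by positivity)]
  choose! c hc1 hc2 hc3 using key
  obtain ⟨T0, hT0sub, hT0fin, hT0cov⟩ := hfcomp.finite_cover_balls (show (0:ℝ) < δ/4 by positivity)
  set T := hT0fin.toFinset with hT
  have hTsub : ∀ q ∈ T, q ∈ frontier D := fun q hq => hT0sub (hT0fin.mem_toFinset.1 hq)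
  obtain ⟨S, hST, hsep, hmax⟩ := exists_maximal_separated T (δ/2) (by positivity)
  have hSfront : ∀ s ∈ S, s ∈ frontier D := fun s hs => hTsub s (hST hs)
  have hcov : frontier D ⊆ ⋃ s ∈ S, frontier D ∩ ball s δ := by
    intro x hx
    obtain hx' := hT0cov hx
    simp only [Set.mem_iUnion, Set.mem_inter_iff, exists_prop] at hx' ⊢
    obtain ⟨q, hqT0, hq⟩ := hx'
    have hqT : q ∈ T := hT0fin.mem_toFinset.2 hqT0
    obtain ⟨s, hsS, hqs⟩ := hmax q hqT
    refine ⟨s, hsS, hx, ?_⟩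
    rw [mem_ball] at *
    calc dist x s ≤ dist x q + dist q s := dist_triangle _ _ _
      _ < δ/4 + δ/2 := by linarith
      _ < δ := by linarith
  have hper : μH[1] (frontier D) ≤ (S.card : ℝ≥0∞) * ENNReal.ofReal ((1+L)*(2*δ)) := by
    calc μH[1] (frontier D) ≤ μH[1] (⋃ s ∈ S, frontier D ∩ ball s δ) := measure_mono hcov
      _ ≤ ∑ s ∈ S, μH[1] (frontier D ∩ ball s δ) := measure_biUnion_finset_le _ _
      _ ≤ ∑ _s ∈ S, ENNReal.ofReal ((1+L)*(2*δ)) :=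
          Finset.sum_le_sum (fun s hs => hc3 s (hSfront s hs))
      _ = S.card * ENNReal.ofReal ((1+L)*(2*δ)) := by rw [Finset.sum_const, nsmul_eq_mul]
  have hdisj : (S : Set (EuclideanSpace ℝ (Fin 2))).PairwiseDisjoint (fun s => ball (c s) rad) := by
    intro s hs s' hs' hne
    apply ball_disjoint_ball
    have h1 := hc1 s (hSfront s hs)
    have h2 := hc1 s' (hSfront s' hs')
    have h3 := hsep s hs s' hs' hne
    have h4 : dist s s' ≤ dist s (c s) + dist (c s) (c s') + dist (c s') s' :=
      dist_triangle4 _ _ _ _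
    have h5 : rad + rad ≤ δ/4 := by
      rw [hraddef]
      rw [← add_div, div_le_div_iff₀ (by positivity) (by positivity)]
      nlinarith
    rw [dist_comm s (c s)] at h4
    linarith
  have hballvol : ∀ x : EuclideanSpace ℝ (Fin 2),
      volume (ball x rad) = ENNReal.ofReal rad ^ 2 * B := by
    intro x
    rw [hB, EuclideanSpace.volume_ball, EuclideanSpace.volume_ball]
    simp [Fintype.card_fin, ENNReal.ofReal_one]
  have hvol : (S.card : ℝ≥0∞) * (ENNReal.ofReal rad ^ 2 * B) ≤ volume D := by
    have hsum : ∑ s ∈ S, volume (ball (c s) rad)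
        = (S.card : ℝ≥0∞) * (ENNReal.ofReal rad ^ 2 * B) := by
      rw [Finset.sum_congr rfl (fun s _ => hballvol (c s)), Finset.sum_const, nsmul_eq_mul]
    calc (S.card : ℝ≥0∞) * (ENNReal.ofReal rad ^ 2 * B)
        = volume (⋃ s ∈ S, ball (c s) rad) := by
          rw [measure_biUnion_finset hdisj (fun s _ => measurableSet_ball), hsum]
      _ ≤ volume D := measure_mono (Set.iUnion₂_subset fun s hs => hc2 s (hSfront s hs))
  have hvolDfin : volume D ≠ ⊤ :=
    (lt_of_le_of_lt (measure_mono subset_closure) hclcomp.measure_lt_top).ne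
  set N := (S.card : ℝ) with hN
  set A := (volume D).toReal with hA
  have hperR : (μH[1] (frontier D)).toReal ≤ N * ((1+L)*(2*δ)) := by
    have hfin : (S.card : ℝ≥0∞) * ENNReal.ofReal ((1+L)*(2*δ)) ≠ ⊤ :=
      ENNReal.mul_ne_top (ENNReal.natCast_ne_top _) ENNReal.ofReal_ne_top
    have := ENNReal.toReal_mono hfin hper
    rwa [ENNReal.toReal_mul, ENNReal.toReal_natCast,
      ENNReal.toReal_ofReal (by positivity)] at this
  have hvolR : N * (rad^2 * c₀) ≤ A := by
    have := ENNReal.toReal_mono hvolDfin hvol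
    rwa [ENNReal.toReal_mul, ENNReal.toReal_mul, ENNReal.toReal_pow, ENNReal.toReal_natCast,
      ENNReal.toReal_ofReal hradpos.le] at this
  rw [le_div_iff₀ hδ, div_mul_eq_mul_div, le_div_iff₀ hc₀]
  have h2' : N * (δ^2 * c₀) ≤ A * (64*(1+L)^2) := by
    have hstep := mul_le_mul_of_nonneg_right hvolR (show (0:ℝ) ≤ 64*(1+L)^2 by positivity)
    have hradsq : rad^2 * (64*(1+L)^2) = δ^2 := by
      have h8 : (8*(1+L)) ≠ 0 := by positivity
      rw [hraddef, div_pow]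
      field_simp
      ring
    calc N * (δ^2*c₀) = N * (rad^2*c₀) * (64*(1+L)^2) := by rw [← hradsq]; ring
      _ ≤ A * (64*(1+L)^2) := hstep
  have p1 := mul_le_mul_of_nonneg_right hperR (mul_pos hδ hc₀).le
  have p2 := mul_le_mul_of_nonneg_left h2' (show (0:ℝ) ≤ 2*(1+L) by positivity)
  nlinarith [p1, p2]

end
end
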